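/- Let n, N be positive integers, let Ω be a nonempty finite set with weights p_ω ≥ 0 summing to 1, and for each ω ∈ Ω let x_ω(0), …, x_ω(N−1) ∈ ℝ^n. Let U := {K ∈ ℝ^n : 1 + ⟨K, x_ω(i)⟩ > 0 for all ω ∈ Ω and all i = 0, …, N−1}. Then U is convex and the function F(K) := ∑_{ω ∈ Ω} p_ω · min_{0 ≤ ℓ < k ≤ N} ∑_{i=ℓ}^{k−1} log(1 + ⟨K, x_ω(i)⟩) is concave on U. Moreover, for every δ ∈ (0, 1), the superlevel set D_δ := {K ∈ U : F(K) ≥ log(1 − δ)} is convex. -/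

import Mathlib

open Finset Real

private lemma drawdown_expand {n : ℕ} (K1 K2 : Fin n → ℝ) (a b : ℝ) (hab : a + b = 1)
    (v : Fin n → ℝ) :
    1 + ∑ t, (a • K1 + b • K2) t * v t
      = a * (1 + ∑ t, K1 t * v t) + b * (1 + ∑ t, K2 t * v t) := by
  have h : ∑ t, (a • K1 + b • K2) t * v t
      = a * ∑ t, K1 t * v t + b * ∑ t, K2 t * v t := by
    simp [add_mul, mul_assoc, Finset.sum_add_distrib, Finset.mul_sum]
  rw [h]
  linear_combination -hab

private lemma drawdown_sInf_eq {N : ℕ} (hN : 0 < N) (c : ℕ → ℝ) :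
    sInf {y : ℝ | ∃ l k : ℕ, l < k ∧ k ≤ N ∧ y = ∑ i ∈ Finset.Ico l k, c i}
      = (((Finset.range (N+1)) ×ˢ (Finset.range (N+1))).filter
          (fun lk => lk.1 < lk.2 ∧ lk.2 ≤ N)).inf'
          (show Finset.Nonempty _ from ⟨(0, N), by simp [hN, Nat.lt_succ_iff]⟩)
          (fun lk => ∑ i ∈ Finset.Ico lk.1 lk.2, c i) := by
  rw [Finset.inf'_eq_csInf_image]
  congr 1
  ext y
  simp only [Set.mem_setOf_eq, Set.mem_image, Finset.mem_coe, Finset.mem_filter,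
    Finset.mem_product, Finset.mem_range]
  constructor
  · rintro ⟨l, k, h1, h2, rfl⟩
    exact ⟨(l, k), ⟨⟨by omega, by omega⟩, h1, h2⟩, rfl⟩
  · rintro ⟨⟨l, k⟩, ⟨_, h1, h2⟩, rfl⟩
    exact ⟨l, k, h1, h2, rfl⟩

/-- Convexity of the drawdown surrogate: the domain `U` is convex, the expected
log complementary drawdown `F` is concave on `U`, and for every `δ ∈ (0,1)` the
superlevel set `{K ∈ U : F(K) ≥ log(1 − δ)}` is convex. -/
theorem drawdown_surrogate_convex
    (n N : ℕ) (hn : 0 < n) (hN : 0 < N)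
    (Ω : Type*) [Fintype Ω] [Nonempty Ω]
    (p : Ω → ℝ) (hp : ∀ ω, 0 ≤ p ω) (hpsum : (∑ ω, p ω) = 1)
    (x : Ω → ℕ → Fin n → ℝ) :
    Convex ℝ {K : Fin n → ℝ | ∀ (ω : Ω) (i : ℕ), i < N →
        0 < 1 + ∑ t, K t * x ω i t}
    ∧ ConcaveOn ℝ {K : Fin n → ℝ | ∀ (ω : Ω) (i : ℕ), i < N →
        0 < 1 + ∑ t, K t * x ω i t}
        (fun K => ∑ ω, p ω *
          sInf {y : ℝ | ∃ l k : ℕ, l < k ∧ k ≤ N ∧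
            y = ∑ i ∈ Finset.Ico l k, Real.log (1 + ∑ t, K t * x ω i t)})
    ∧ ∀ δ : ℝ, 0 < δ → δ < 1 →
        Convex ℝ {K : Fin n → ℝ |
          (∀ (ω : Ω) (i : ℕ), i < N → 0 < 1 + ∑ t, K t * x ω i t)
          ∧ Real.log (1 - δ) ≤ ∑ ω, p ω *
              sInf {y : ℝ | ∃ l k : ℕ, l < k ∧ k ≤ N ∧
                y = ∑ i ∈ Finset.Ico l k, Real.log (1 + ∑ t, K t * x ω i t)}} := by
  -- notation
  set U : Set (Fin n → ℝ) :=
    {K : Fin n → ℝ | ∀ (ω : Ω) (i : ℕ), i < N → 0 < 1 + ∑ t, K t * x ω i t} with hUdef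
  set g : Ω → (Fin n → ℝ) → ℝ := fun ω K =>
    sInf {y : ℝ | ∃ l k : ℕ, l < k ∧ k ≤ N ∧
      y = ∑ i ∈ Finset.Ico l k, Real.log (1 + ∑ t, K t * x ω i t)} with hgdef
  set F : (Fin n → ℝ) → ℝ := fun K => ∑ ω, p ω * g ω K with hFdef
  -- convexity of U
  have hU : Convex ℝ U := by
    intro K1 hK1 K2 hK2 a b ha hb hab
    intro ω i hi
    rw [drawdown_expand K1 K2 a b hab]
    have h1 := hK1 ω i hi
    have h2 := hK2 ω i hi
    rcases lt_or_eq_of_le ha with hapos | haeq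
    · nlinarith [mul_pos hapos h1, mul_nonneg hb h2.le]
    · have hb1 : b = 1 := by linarith
      nlinarith [mul_pos (show (0:ℝ) < b by linarith) h2]
  -- key concavity inequality for each g ω
  have hg : ∀ (ω : Ω), ∀ K1 ∈ U, ∀ K2 ∈ U, ∀ a b : ℝ, 0 ≤ a → 0 ≤ b → a + b = 1 →
      a * g ω K1 + b * g ω K2 ≤ g ω (a • K1 + b • K2) := by
    intro ω K1 hK1 K2 hK2 a b ha hb hab
    have hne : (((Finset.range (N+1)) ×ˢ (Finset.range (N+1))).filter
        (fun lk => lk.1 < lk.2 ∧ lk.2 ≤ N)).Nonempty :=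
      ⟨(0, N), by simp [hN, Nat.lt_succ_iff]⟩
    simp only [hgdef]
    rw [drawdown_sInf_eq hN, drawdown_sInf_eq hN, drawdown_sInf_eq hN]
    apply Finset.le_inf'
    intro lk hlk
    simp only [Finset.mem_filter, Finset.mem_product, Finset.mem_range] at hlk
    obtain ⟨-, hlt, hle⟩ := hlk
    have h1 : (((Finset.range (N+1)) ×ˢ (Finset.range (N+1))).filter
        (fun lk => lk.1 < lk.2 ∧ lk.2 ≤ N)).inf' hne
          (fun lk => ∑ i ∈ Finset.Ico lk.1 lk.2,
            Real.log (1 + ∑ t, K1 t * x ω i t))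
        ≤ ∑ i ∈ Finset.Ico lk.1 lk.2, Real.log (1 + ∑ t, K1 t * x ω i t) :=
      Finset.inf'_le _ (by simp [Finset.mem_filter, Finset.mem_product, Nat.lt_succ_iff]
        <;> omega)
    have h2 : (((Finset.range (N+1)) ×ˢ (Finset.range (N+1))).filter
        (fun lk => lk.1 < lk.2 ∧ lk.2 ≤ N)).inf' hne
          (fun lk => ∑ i ∈ Finset.Ico lk.1 lk.2,
            Real.log (1 + ∑ t, K2 t * x ω i t))
        ≤ ∑ i ∈ Finset.Ico lk.1 lk.2, Real.log (1 + ∑ t, K2 t * x ω i t) :=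
      Finset.inf'_le _ (by simp [Finset.mem_filter, Finset.mem_product, Nat.lt_succ_iff]
        <;> omega)
    have hterm : ∀ i ∈ Finset.Ico lk.1 lk.2,
        a * Real.log (1 + ∑ t, K1 t * x ω i t)
          + b * Real.log (1 + ∑ t, K2 t * x ω i t)
        ≤ Real.log (1 + ∑ t, (a • K1 + b • K2) t * x ω i t) := by
      intro i hi
      have hiN : i < N := by
        rw [Finset.mem_Ico] at hi; omega
      have hu := hK1 ω i hiN
      have hv := hK2 ω i hiN
      rw [drawdown_expand K1 K2 a b hab]
      have := strictConcaveOn_log_Ioi.concaveOn.2 (Set.mem_Ioi.2 hu) (Set.mem_Ioi.2 hv)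
        ha hb hab
      simpa [smul_eq_mul] using this
    calc a * (((Finset.range (N+1)) ×ˢ (Finset.range (N+1))).filter
          (fun lk => lk.1 < lk.2 ∧ lk.2 ≤ N)).inf' hne
            (fun lk => ∑ i ∈ Finset.Ico lk.1 lk.2,
              Real.log (1 + ∑ t, K1 t * x ω i t))
        + b * (((Finset.range (N+1)) ×ˢ (Finset.range (N+1))).filter
          (fun lk => lk.1 < lk.2 ∧ lk.2 ≤ N)).inf' hne
            (fun lk => ∑ i ∈ Finset.Ico lk.1 lk.2,
              Real.log (1 + ∑ t, K2 t * x ω i t))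
        ≤ a * ∑ i ∈ Finset.Ico lk.1 lk.2, Real.log (1 + ∑ t, K1 t * x ω i t)
          + b * ∑ i ∈ Finset.Ico lk.1 lk.2, Real.log (1 + ∑ t, K2 t * x ω i t) := by
          gcongr
      _ = ∑ i ∈ Finset.Ico lk.1 lk.2,
            (a * Real.log (1 + ∑ t, K1 t * x ω i t)
              + b * Real.log (1 + ∑ t, K2 t * x ω i t)) := by
          rw [Finset.sum_add_distrib, Finset.mul_sum, Finset.mul_sum]
      _ ≤ ∑ i ∈ Finset.Ico lk.1 lk.2,
            Real.log (1 + ∑ t, (a • K1 + b • K2) t * x ω i t) :=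
          Finset.sum_le_sum hterm
  -- concavity of F
  have hF : ConcaveOn ℝ U F := by
    refine ⟨hU, ?_⟩
    intro K1 hK1 K2 hK2 a b ha hb hab
    simp only [smul_eq_mul, hFdef]
    rw [Finset.mul_sum, Finset.mul_sum, ← Finset.sum_add_distrib]
    apply Finset.sum_le_sum
    intro ω _
    have := hg ω K1 hK1 K2 hK2 a b ha hb hab
    have h := mul_le_mul_of_nonneg_left this (hp ω)
    nlinarith [h]
  refine ⟨hU, hF, ?_⟩
  intro δ hδ0 hδ1
  intro K1 hK1 K2 hK2 a b ha hb hab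
  obtain ⟨hK1U, hK1F⟩ := hK1
  obtain ⟨hK2U, hK2F⟩ := hK2
  constructor
  · exact hU hK1U hK2U ha hb hab
  · have hcc := hF.2 hK1U hK2U ha hb hab
    simp only [smul_eq_mul] at hcc
    have h1 : a * Real.log (1 - δ) ≤ a * F K1 := mul_le_mul_of_nonneg_left hK1F ha
    have h2 : b * Real.log (1 - δ) ≤ b * F K2 := mul_le_mul_of_nonneg_left hK2F hb
    calc Real.log (1 - δ) = a * Real.log (1 - δ) + b * Real.log (1 - δ) := by
          linear_combination (Real.log (1 - δ)) * hab.symm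
      _ ≤ a * F K1 + b * F K2 := add_le_add h1 h2
      _ ≤ F (a • K1 + b • K2) := hcc
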